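/- arXiv:1503.07558 — 5 statements merged into one kernel-verified Lean document; each statement's English description precedes it below -/
import Mathlib

section
/- Let X, Y be real random variables defined on a common probability space, let Z be a real random variable whose law has a density (with respect to Lebesgue measure) bounded by c > 0, and let a ≥ 1. Then d_K(Y,Z) ≤ 3 d_K(X,Z) + ‖X − Y‖_a^{a/(1+a)} (1 + 4c). -/
open MeasureTheory
open scoped ENNReal

/-- The Kolmogorov (uniform) distance between the distribution of a real random variable `f`
(under `P`) and a law `ν` on `ℝ`. -/
noncomputable def kolDist {Ω : Type*} [MeasurableSpace Ω]
    (P : Measure Ω) (f : Ω → ℝ) (ν : Measure ℝ) : ℝ :=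
  ⨆ x : ℝ, |(P {ω | f ω ≤ x}).toReal - (ν (Set.Iic x)).toReal|

lemma abs_le_kolDist {Ω : Type*} [MeasurableSpace Ω]
    (P : Measure Ω) [IsProbabilityMeasure P] (f : Ω → ℝ)
    (ν : Measure ℝ) [IsProbabilityMeasure ν] (x : ℝ) :
    |(P {ω | f ω ≤ x}).toReal - (ν (Set.Iic x)).toReal| ≤ kolDist P f ν := by
  refine le_ciSup (f := fun x : ℝ => |(P {ω | f ω ≤ x}).toReal - (ν (Set.Iic x)).toReal|) ?_ x
  refine ⟨1, ?_⟩
  rintro _ ⟨y, rfl⟩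
  have h1 : (P {ω | f ω ≤ y}).toReal ≤ 1 := by
    have := prob_le_one (μ := P) (s := {ω | f ω ≤ y})
    simpa using ENNReal.toReal_mono (by simp) this
  have h2 : (ν (Set.Iic y)).toReal ≤ 1 := by
    have := prob_le_one (μ := ν) (s := Set.Iic y)
    simpa using ENNReal.toReal_mono (by simp) this
  have h3 : (0:ℝ) ≤ (P {ω | f ω ≤ y}).toReal := ENNReal.toReal_nonneg
  have h4 : (0:ℝ) ≤ (ν (Set.Iic y)).toReal := ENNReal.toReal_nonneg
  rw [abs_sub_le_iff]
  constructor <;> linarith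

lemma kolDist_nonneg {Ω : Type*} [MeasurableSpace Ω]
    (P : Measure Ω) (f : Ω → ℝ) (ν : Measure ℝ) : 0 ≤ kolDist P f ν :=
  Real.iSup_nonneg fun _ => abs_nonneg _

/-- **Lemma 3.3.** If `X, Y` are random variables on a common probability space and `Z` is a
random variable whose law `ν` has a density bounded by `c > 0`, then for any `a ≥ 1`,
`d_K(Y,Z) ≤ 3 d_K(X,Z) + ‖X−Y‖_a^{a/(1+a)} (1+4c)`. -/
theorem kolDist_le_of_close
    {Ω : Type*} [MeasurableSpace Ω] (P : Measure Ω) [IsProbabilityMeasure P]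
    (X Y : Ω → ℝ) (hX : Measurable X) (hY : Measurable Y)
    (ν : Measure ℝ) [IsProbabilityMeasure ν]
    (ρ : ℝ → ℝ≥0∞) (c : ℝ) (hc : 0 < c)
    (hν : ν = MeasureTheory.volume.withDensity ρ)
    (hρ : ∀ x, ρ x ≤ ENNReal.ofReal c)
    (a : ℝ) (ha : 1 ≤ a) :
    ENNReal.ofReal (kolDist P Y ν) ≤
      3 * ENNReal.ofReal (kolDist P X ν) +
        (eLpNorm (fun ω => X ω - Y ω) (ENNReal.ofReal a) P) ^ (a / (1 + a)) *
          ENNReal.ofReal (1 + 4 * c) := by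
  have ha0 : (0:ℝ) < a := lt_of_lt_of_le one_pos ha
  have h1a : (0:ℝ) < 1 + a := by linarith
  have hr : (0:ℝ) < a / (1 + a) := div_pos ha0 h1a
  set L := eLpNorm (fun ω => X ω - Y ω) (ENNReal.ofReal a) P with hL
  have hp0 : ENNReal.ofReal a ≠ 0 := by simp [ENNReal.ofReal_eq_zero]; linarith
  have hptop : ENNReal.ofReal a ≠ ∞ := ENNReal.ofReal_ne_top
  have hpto : (ENNReal.ofReal a).toReal = a := ENNReal.toReal_ofReal ha0.le
  by_cases hLtop : L = ⊤
  · -- RHS is infinite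
    have h1 : L ^ (a / (1 + a)) = ⊤ := by
      rw [hLtop]; exact ENNReal.top_rpow_of_pos hr
    have h2 : L ^ (a / (1 + a)) * ENNReal.ofReal (1 + 4 * c) = ⊤ := by
      rw [h1]
      exact ENNReal.top_mul (by simp [ENNReal.ofReal_eq_zero]; linarith)
    rw [h2, add_top]
    exact le_top
  by_cases hL0 : L = 0
  · -- X = Y a.e.
    have hXY : ∀ᵐ ω ∂P, X ω = Y ω := by
      have := (eLpNorm_eq_zero_iff ((hX.sub hY).aestronglyMeasurable) hp0).1 hL0
      filter_upwards [this] with ω hω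
      have : X ω - Y ω = 0 := hω
      linarith
    have hkeq : kolDist P Y ν = kolDist P X ν := by
      unfold kolDist
      congr 1
      ext x
      have hPe : P {ω | Y ω ≤ x} = P {ω | X ω ≤ x} := by
        apply measure_congr
        rw [Filter.eventuallyEq_set]
        filter_upwards [hXY] with ω hω
        simp [Set.mem_setOf_eq, hω]
      rw [hPe]
    rw [hkeq]
    refine le_trans ?_ le_self_add
    exact le_mul_of_one_le_left zero_le (by norm_num)
  -- main case : 0 < L < ∞
  set N := L.toReal with hN
  have hNpos : 0 < N := ENNReal.toReal_pos hL0 hLtop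
  set r := a / (1 + a) with hrdef
  set δ := N ^ r with hδdef
  have hδ : 0 < δ := Real.rpow_pos_of_pos hNpos r
  have hLN : L = ENNReal.ofReal N := (ENNReal.ofReal_toReal hLtop).symm
  -- Markov inequality
  have hmark : P {ω | δ ≤ |X ω - Y ω|} ≤ ENNReal.ofReal δ := by
    have hmeas := meas_ge_le_mul_pow_eLpNorm_enorm (μ := P) (f := fun ω => X ω - Y ω) hp0 hptop
      ((hX.sub hY).aestronglyMeasurable) (ε := ENNReal.ofReal δ)
      (by simp [ENNReal.ofReal_eq_zero]; linarith) (fun h => absurd h ENNReal.ofReal_ne_top)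
    have hset : {ω | (ENNReal.ofReal δ) ≤ ‖X ω - Y ω‖ₑ} = {ω | δ ≤ |X ω - Y ω|} := by
      ext ω
      rw [Set.mem_setOf_eq, Set.mem_setOf_eq, ← ofReal_norm_eq_enorm,
        ENNReal.ofReal_le_ofReal_iff (norm_nonneg _), Real.norm_eq_abs]
    rw [hset] at hmeas
    refine hmeas.trans (le_of_eq ?_)
    rw [hpto, ← hL, hLN, ← ENNReal.ofReal_inv_of_pos hδ,
      ENNReal.ofReal_rpow_of_pos (inv_pos.2 hδ), ENNReal.ofReal_rpow_of_pos hNpos,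
      ← ENNReal.ofReal_mul (by positivity)]
    congr 1
    have h1 : δ⁻¹ ^ a = N ^ (-(r * a)) := by
      rw [hδdef, ← Real.rpow_neg hNpos.le, ← Real.rpow_mul hNpos.le, neg_mul]
    rw [h1, ← Real.rpow_add hNpos, hδdef]
    congr 1
    rw [hrdef]
    field_simp
    ring
  -- density bound
  have hνIoc : ∀ u v : ℝ, u ≤ v → (ν (Set.Ioc u v)).toReal ≤ c * (v - u) := by
    intro u v huv
    have hb : ν (Set.Ioc u v) ≤ ENNReal.ofReal (c * (v - u)) := by
      rw [hν, withDensity_apply _ measurableSet_Ioc]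
      calc ∫⁻ x in Set.Ioc u v, ρ x ∂volume
          ≤ ∫⁻ _ in Set.Ioc u v, ENNReal.ofReal c ∂volume :=
            lintegral_mono fun x => hρ x
        _ = ENNReal.ofReal c * volume (Set.Ioc u v) := setLIntegral_const _ _
        _ = ENNReal.ofReal (c * (v - u)) := by
            rw [Real.volume_Ioc, ← ENNReal.ofReal_mul hc.le]
    exact ENNReal.toReal_le_of_le_ofReal (mul_nonneg hc.le (by linarith)) hb
  -- finiteness facts
  have hPfin : ∀ s : Set Ω, P s ≠ ⊤ := fun s => measure_ne_top P s
  have hνfin : ∀ s : Set ℝ, ν s ≠ ⊤ := fun s => measure_ne_top ν s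
  set K := kolDist P X ν with hK
  have hK0 : 0 ≤ K := kolDist_nonneg P X ν
  -- pointwise bound
  have hpt : ∀ x : ℝ, |(P {ω | Y ω ≤ x}).toReal - (ν (Set.Iic x)).toReal| ≤ K + δ * (1 + c) := by
    intro x
    have hsplit : ∀ u v : ℝ, u ≤ v → (ν (Set.Iic v)).toReal
        = (ν (Set.Iic u)).toReal + (ν (Set.Ioc u v)).toReal := by
      intro u v huv
      rw [← Set.Iic_union_Ioc_eq_Iic huv,
        measure_union (Set.Iic_disjoint_Ioc le_rfl) measurableSet_Ioc,
        ENNReal.toReal_add (hνfin _) (hνfin _)]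
    rw [abs_sub_le_iff]
    constructor
    · -- P(Y≤x) - ν(Iic x) ≤ K + δ(1+c)
      have hincl : {ω | Y ω ≤ x} ⊆ {ω | X ω ≤ x + δ} ∪ {ω | δ ≤ |X ω - Y ω|} := by
        intro ω hω
        rcases le_or_gt (X ω) (x + δ) with h | h
        · exact Or.inl h
        · refine Or.inr ?_
          have : Y ω ≤ x := hω
          rw [Set.mem_setOf_eq, abs_sub_comm, abs_of_nonpos (by linarith)]
          linarith
      have h1 : (P {ω | Y ω ≤ x}).toReal ≤ (P {ω | X ω ≤ x + δ}).toReal + δ := by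
        have := (measure_mono hincl).trans
          ((measure_union_le _ _).trans (add_le_add_right hmark _))
        calc (P {ω | Y ω ≤ x}).toReal
            ≤ (P {ω | X ω ≤ x + δ} + ENNReal.ofReal δ).toReal :=
              ENNReal.toReal_mono (by simp [hPfin, ENNReal.add_ne_top]) this
          _ = (P {ω | X ω ≤ x + δ}).toReal + δ := by
              rw [ENNReal.toReal_add (hPfin _) ENNReal.ofReal_ne_top,
                ENNReal.toReal_ofReal hδ.le]
      have h2 : (ν (Set.Iic (x + δ))).toReal ≤ (ν (Set.Iic x)).toReal + c * δ := by
        rw [hsplit x (x + δ) (by linarith)]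
        have h := hνIoc x (x + δ) (by linarith)
        have heq : x + δ - x = δ := by ring
        rw [heq] at h
        linarith
      have h3 : (P {ω | X ω ≤ x + δ}).toReal - (ν (Set.Iic (x + δ))).toReal ≤ K := by
        have h := abs_le_kolDist P X ν (x + δ)
        rw [abs_sub_le_iff] at h
        exact h.1
      nlinarith
    · -- ν(Iic x) - P(Y≤x) ≤ K + δ(1+c)
      have hincl : {ω | X ω ≤ x - δ} ⊆ {ω | Y ω ≤ x} ∪ {ω | δ ≤ |X ω - Y ω|} := by
        intro ω hω
        rcases le_or_gt (Y ω) x with h | h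
        · exact Or.inl h
        · refine Or.inr ?_
          have : X ω ≤ x - δ := hω
          rw [Set.mem_setOf_eq, abs_of_nonpos (by linarith)]
          linarith
      have h1 : (P {ω | X ω ≤ x - δ}).toReal ≤ (P {ω | Y ω ≤ x}).toReal + δ := by
        have := (measure_mono hincl).trans
          ((measure_union_le _ _).trans (add_le_add_right hmark _))
        calc (P {ω | X ω ≤ x - δ}).toReal
            ≤ (P {ω | Y ω ≤ x} + ENNReal.ofReal δ).toReal :=
              ENNReal.toReal_mono (by simp [hPfin, ENNReal.add_ne_top]) this
          _ = (P {ω | Y ω ≤ x}).toReal + δ := by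
              rw [ENNReal.toReal_add (hPfin _) ENNReal.ofReal_ne_top,
                ENNReal.toReal_ofReal hδ.le]
      have h2 : (ν (Set.Iic x)).toReal ≤ (ν (Set.Iic (x - δ))).toReal + c * δ := by
        rw [hsplit (x - δ) x (by linarith)]
        have h := hνIoc (x - δ) x (by linarith)
        have heq : x - (x - δ) = δ := by ring
        rw [heq] at h
        linarith
      have h3 : (ν (Set.Iic (x - δ))).toReal - (P {ω | X ω ≤ x - δ}).toReal ≤ K := by
        have h := abs_le_kolDist P X ν (x - δ)
        rw [abs_sub_le_iff] at h
        exact h.2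
      nlinarith
  have hsup : kolDist P Y ν ≤ K + δ * (1 + c) := by
    refine Real.iSup_le (fun x => hpt x) ?_
    nlinarith
  -- final conversion to ENNReal
  have hpow : L ^ r = ENNReal.ofReal δ := by
    rw [hLN, ENNReal.ofReal_rpow_of_pos hNpos]
  calc ENNReal.ofReal (kolDist P Y ν)
      ≤ ENNReal.ofReal (K + δ * (1 + c)) := ENNReal.ofReal_le_ofReal hsup
    _ = ENNReal.ofReal K + ENNReal.ofReal δ * ENNReal.ofReal (1 + c) := by
        rw [ENNReal.ofReal_add hK0 (by positivity), ENNReal.ofReal_mul hδ.le]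
    _ ≤ 3 * ENNReal.ofReal K + ENNReal.ofReal δ * ENNReal.ofReal (1 + 4 * c) :=
        add_le_add (le_mul_of_one_le_left zero_le (by norm_num))
          (mul_le_mul_right (ENNReal.ofReal_le_ofReal (by linarith)) _)
    _ = 3 * ENNReal.ofReal K + L ^ r * ENNReal.ofReal (1 + 4 * c) := by rw [hpow]
end

section
/- Suppose {a_n}_{n≥1} is a sequence of nonnegative real numbers such that for some integer l ≥ 1, constants c > 0 and C > 0, and every integer n ≥ 1, a_{n+1} ≤ c Σ_{j=1}^n Σ_{r=2}^{2l} C^r a_j^{(2l−r)/(2l)}. Then a_n ≤ A n^l for all n ≥ 1, where A = max{ 2^l c^l C^{2l}, C^{2l}, a_1 }. -/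
open scoped BigOperators

private lemma sum_range_two_mul' (l : ℕ) (f : ℕ → ℝ) :
    ∑ m ∈ Finset.range (2 * l), f m
      = ∑ i ∈ Finset.range l, (f (2 * i) + f (2 * i + 1)) := by
  induction l with
  | zero => simp
  | succ l ih =>
    have h : 2 * (l + 1) = 2 * l + 1 + 1 := by ring
    rw [h, Finset.sum_range_succ, Finset.sum_range_succ, ih, Finset.sum_range_succ]
    ring

private lemma sum_pow_succ_le (x : ℝ) (hx : 0 ≤ x) (l : ℕ) :
    ∑ i ∈ Finset.range l, x ^ (i + 1) ≤ (x + 1) ^ l := by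
  induction l with
  | zero => simp
  | succ l ih =>
    rw [Finset.sum_range_succ]
    have h1 : x ^ l ≤ (x + 1) ^ l := pow_le_pow_left₀ hx (by linarith) l
    have h2 : (x + 1) ^ (l + 1) = (x + 1) ^ l * x + (x + 1) ^ l := by ring
    have h3 : x ^ (l + 1) = x ^ l * x := by ring
    nlinarith [pow_nonneg hx l]

private lemma half_power_sum (x : ℝ) (hx : 1 ≤ x) (l : ℕ) (hl : 1 ≤ l) :
    x * ∑ r ∈ Finset.Icc 2 (2 * l), x ^ (l - r / 2) ≤ 2 * (x + 1) ^ l := by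
  have hx0 : (0:ℝ) ≤ x := le_trans zero_le_one hx
  have h1 : x * ∑ r ∈ Finset.Icc 2 (2 * l), x ^ (l - r / 2)
      = ∑ r ∈ Finset.Icc 2 (2 * l), x ^ (l - r / 2 + 1) := by
    rw [Finset.mul_sum]
    refine Finset.sum_congr rfl fun r _ => ?_
    rw [pow_succ]; ring
  rw [h1]
  have h2 : ∑ r ∈ Finset.Icc 2 (2 * l), x ^ (l - r / 2 + 1)
      ≤ ∑ r ∈ Finset.Icc 2 (2 * l + 1), x ^ (l - r / 2 + 1) := by
    apply Finset.sum_le_sum_of_subset_of_nonneg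
    · exact Finset.Icc_subset_Icc_right (by omega)
    · intro i _ _; positivity
  refine le_trans h2 ?_
  rw [← Finset.Ico_add_one_right_eq_Icc, Finset.sum_Ico_eq_sum_range]
  have hn : 2 * l + 1 + 1 - 2 = 2 * l := by omega
  rw [hn, sum_range_two_mul' l]
  have h4 : ∀ i ∈ Finset.range l,
      (x ^ (l - (2 + 2 * i) / 2 + 1) + x ^ (l - (2 + (2 * i + 1)) / 2 + 1))
        = 2 * x ^ (l - i) := by
    intro i hi
    simp only [Finset.mem_range] at hi
    have e1 : (2 + 2 * i) / 2 = i + 1 := by omega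
    have e2 : (2 + (2 * i + 1)) / 2 = i + 1 := by omega
    have e3 : l - (i + 1) + 1 = l - i := by omega
    rw [e1, e2, e3]; ring
  rw [Finset.sum_congr rfl h4, ← Finset.mul_sum]
  have h5 : ∑ i ∈ Finset.range l, x ^ (l - i) = ∑ i ∈ Finset.range l, x ^ (i + 1) := by
    rw [← Finset.sum_range_reflect (fun i => x ^ (i + 1)) l]
    refine Finset.sum_congr rfl fun i hi => ?_
    simp only [Finset.mem_range] at hi
    congr 1
    omega
  rw [h5]
  have := sum_pow_succ_le x hx0 l
  linarith

private lemma term_bound (l r : ℕ) (hl : 1 ≤ l) (hr2 : 2 ≤ r) (hrl : r ≤ 2 * l)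
    (c C A t x : ℝ) (hc : 0 < c) (hC : 0 < C) (hA : 0 < A)
    (hAC : C ^ (2 * l) ≤ A) (hAcC : (2 * c * C ^ 2) ^ l ≤ A)
    (hx : 1 ≤ x) (ht : 0 ≤ t) (htx : t ≤ A * x ^ l) :
    c * (C ^ r * t ^ (((2 * l - r : ℕ) : ℝ) / ((2 * l : ℕ) : ℝ)))
      ≤ A / 2 * x ^ (l - r / 2) := by
  have hl0 : (l : ℝ) ≠ 0 := Nat.cast_ne_zero.mpr (by omega)
  have hLpos : (0:ℝ) < ((2 * l : ℕ) : ℝ) := by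
    have : 0 < 2 * l := by omega
    exact_mod_cast this
  set θ : ℝ := ((2 * l - r : ℕ) : ℝ) / ((2 * l : ℕ) : ℝ) with hθ
  have hθ0 : 0 ≤ θ := by positivity
  have hx0 : (0:ℝ) ≤ x := le_trans zero_le_one hx
  have hcastL : ((2 * l : ℕ) : ℝ) = 2 * (l : ℝ) := by push_cast; ring
  have hcast1 : ((2 * l - r : ℕ) : ℝ) = 2 * (l : ℝ) - (r : ℝ) := by
    rw [Nat.cast_sub hrl]; push_cast; ring
  have h1 : t ^ θ ≤ A ^ θ * (x ^ l) ^ θ := by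
    rw [← Real.mul_rpow hA.le (by positivity)]
    exact Real.rpow_le_rpow ht htx hθ0
  have h2 : (x ^ l) ^ θ ≤ x ^ (l - r / 2) := by
    rw [← Real.rpow_natCast x l, ← Real.rpow_mul hx0, ← Real.rpow_natCast x (l - r / 2)]
    apply Real.rpow_le_rpow_of_exponent_le hx
    have hdiv : ((r / 2 : ℕ) : ℝ) ≤ (r : ℝ) / 2 := Nat.cast_div_le
    have hrl2 : r / 2 ≤ l := by omega
    have hcast2 : ((l - r / 2 : ℕ) : ℝ) = (l : ℝ) - ((r / 2 : ℕ) : ℝ) := by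
      rw [Nat.cast_sub hrl2]
    rw [hθ, hcast1, hcastL, hcast2]
    have heq : (l : ℝ) * ((2 * (l : ℝ) - r) / (2 * l)) = (2 * (l : ℝ) - r) / 2 := by
      field_simp
    rw [heq]
    linarith
  have h3 : c * C ^ r * A ^ θ ≤ A / 2 := by
    have hrL : (0:ℝ) ≤ ((r : ℝ) - 2) / ((2 * l : ℕ) : ℝ) := by
      apply div_nonneg _ hLpos.le
      have : (2:ℝ) ≤ (r:ℝ) := by exact_mod_cast hr2
      linarith
    have e1 : 2 * c * C ^ 2 ≤ A ^ ((l : ℝ)⁻¹) := by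
      calc 2 * c * C ^ 2 = ((2 * c * C ^ 2) ^ l) ^ ((l : ℝ)⁻¹) :=
            (Real.pow_rpow_inv_natCast (by positivity) (by omega)).symm
        _ ≤ A ^ ((l : ℝ)⁻¹) := Real.rpow_le_rpow (by positivity) hAcC (by positivity)
    have e2 : C ^ (r - 2) ≤ A ^ (((r : ℝ) - 2) / ((2 * l : ℕ) : ℝ)) := by
      have key : (C ^ (r - 2 : ℕ) : ℝ)
          = (C ^ (2 * l)) ^ (((r : ℝ) - 2) / ((2 * l : ℕ) : ℝ)) := by
        rw [← Real.rpow_natCast C (2 * l), ← Real.rpow_mul hC.le,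
          ← Real.rpow_natCast C (r - 2)]
        congr 1
        rw [Nat.cast_sub hr2, hcastL]
        push_cast
        field_simp
      rw [key]
      exact Real.rpow_le_rpow (by positivity) hAC hrL
    have e3 : 2 * c * C ^ r
        ≤ A ^ ((l : ℝ)⁻¹) * A ^ (((r : ℝ) - 2) / ((2 * l : ℕ) : ℝ)) := by
      have hsplit : 2 * c * C ^ r = (2 * c * C ^ 2) * C ^ (r - 2) := by
        have hpow : C ^ r = C ^ 2 * C ^ (r - 2) := by
          rw [← pow_add]
          congr 1
          omega
        rw [hpow]; ring
      rw [hsplit]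
      exact mul_le_mul e1 e2 (by positivity) (by positivity)
    have e4 : A ^ ((l : ℝ)⁻¹) * A ^ (((r : ℝ) - 2) / ((2 * l : ℕ) : ℝ)) * A ^ θ = A := by
      rw [← Real.rpow_add hA, ← Real.rpow_add hA]
      have hexp : (l : ℝ)⁻¹ + ((r : ℝ) - 2) / ((2 * l : ℕ) : ℝ) + θ = 1 := by
        rw [hθ, hcast1, hcastL]
        field_simp
        ring
      rw [hexp, Real.rpow_one]
    have hAθ : 0 ≤ A ^ θ := Real.rpow_nonneg hA.le θ
    calc c * C ^ r * A ^ θ = (2 * c * C ^ r) * A ^ θ / 2 := by ring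
      _ ≤ (A ^ ((l : ℝ)⁻¹) * A ^ (((r : ℝ) - 2) / ((2 * l : ℕ) : ℝ))) * A ^ θ / 2 := by
          gcongr
      _ = A / 2 := by rw [e4]
  calc c * (C ^ r * t ^ θ) ≤ c * (C ^ r * (A ^ θ * (x ^ l) ^ θ)) := by
        have := h1
        gcongr
      _ = (c * C ^ r * A ^ θ) * (x ^ l) ^ θ := by ring
      _ ≤ A / 2 * x ^ (l - r / 2) :=
          mul_le_mul h3 h2 (Real.rpow_nonneg (by positivity) θ) (by positivity)

/-- **Lemma (recursive sequence bound).** If a nonnegative sequence satisfies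
`a_{n+1} ≤ c Σ_{j=1}^n Σ_{r=2}^{2l} C^r a_j^{(2l−r)/(2l)}` for all `n ≥ 1`, then
`a_n ≤ A n^l` for all `n ≥ 1`, with `A = max(2^l c^l C^{2l}, C^{2l}, a_1)`. -/
theorem nonneg_seq_poly_bound
    (a : ℕ → ℝ) (ha : ∀ n, 0 ≤ a n)
    (l : ℕ) (hl : 1 ≤ l) (c C : ℝ) (hc : 0 < c) (hC : 0 < C)
    (hrec : ∀ n : ℕ, 1 ≤ n →
      a (n + 1) ≤ c * ∑ j ∈ Finset.Icc 1 n, ∑ r ∈ Finset.Icc 2 (2 * l),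
        C ^ r * (a j) ^ (((2 * l - r : ℕ) : ℝ) / ((2 * l : ℕ) : ℝ))) :
    ∀ n : ℕ, 1 ≤ n →
      a n ≤ max (max (2 ^ l * c ^ l * C ^ (2 * l)) (C ^ (2 * l))) (a 1) * (n : ℝ) ^ l := by
  set A := max (max (2 ^ l * c ^ l * C ^ (2 * l)) (C ^ (2 * l))) (a 1) with hAdef
  have hC2l : (0:ℝ) < C ^ (2 * l) := pow_pos hC _
  have hA_pos : 0 < A :=
    lt_of_lt_of_le hC2l (le_trans (le_max_right _ _) (le_max_left _ _))
  have hAC : C ^ (2 * l) ≤ A := le_trans (le_max_right _ _) (le_max_left _ _)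
  have hAa1 : a 1 ≤ A := le_max_right _ _
  have hAcC : (2 * c * C ^ 2) ^ l ≤ A := by
    have h : (2 * c * C ^ 2) ^ l = 2 ^ l * c ^ l * C ^ (2 * l) := by
      rw [mul_pow, mul_pow, ← pow_mul]
    rw [h]
    exact le_trans (le_max_left _ _) (le_max_left _ _)
  intro n
  induction n using Nat.strong_induction_on with
  | _ n ih =>
    intro hn
    rcases eq_or_lt_of_le hn with h1 | h2
    · rw [← h1]
      simpa using hAa1
    · obtain ⟨m, rfl⟩ : ∃ m, n = m + 1 := ⟨n - 1, by omega⟩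
      have hm : 1 ≤ m := by omega
      have hm1 : (1:ℝ) ≤ (m:ℝ) := by exact_mod_cast hm
      have hbound : ∀ j ∈ Finset.Icc 1 m, a j ≤ A * (m:ℝ) ^ l := by
        intro j hj
        simp only [Finset.mem_Icc] at hj
        calc a j ≤ A * (j:ℝ) ^ l := ih j (by omega) hj.1
          _ ≤ A * (m:ℝ) ^ l := by
              gcongr
              exact_mod_cast hj.2
      calc a (m + 1)
          ≤ c * ∑ j ∈ Finset.Icc 1 m, ∑ r ∈ Finset.Icc 2 (2 * l),
              C ^ r * (a j) ^ (((2 * l - r : ℕ) : ℝ) / ((2 * l : ℕ) : ℝ)) := hrec m hm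
        _ = ∑ j ∈ Finset.Icc 1 m, ∑ r ∈ Finset.Icc 2 (2 * l),
              c * (C ^ r * (a j) ^ (((2 * l - r : ℕ) : ℝ) / ((2 * l : ℕ) : ℝ))) := by
            rw [Finset.mul_sum]
            exact Finset.sum_congr rfl fun j _ => Finset.mul_sum _ _ _
        _ ≤ ∑ j ∈ Finset.Icc 1 m, ∑ r ∈ Finset.Icc 2 (2 * l),
              A / 2 * (m:ℝ) ^ (l - r / 2) := by
            refine Finset.sum_le_sum fun j hj => Finset.sum_le_sum fun r hr => ?_
            simp only [Finset.mem_Icc] at hr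
            exact term_bound l r hl hr.1 hr.2 c C A (a j) (m:ℝ) hc hC hA_pos hAC hAcC
              hm1 (ha j) (hbound j hj)
        _ = (m:ℝ) * ∑ r ∈ Finset.Icc 2 (2 * l), A / 2 * (m:ℝ) ^ (l - r / 2) := by
            rw [Finset.sum_const, Nat.card_Icc]
            simp [nsmul_eq_mul]
        _ = A / 2 * ((m:ℝ) * ∑ r ∈ Finset.Icc 2 (2 * l), (m:ℝ) ^ (l - r / 2)) := by
            rw [← Finset.mul_sum]
            ring
        _ ≤ A / 2 * (2 * ((m:ℝ) + 1) ^ l) := by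
            have := half_power_sum (m:ℝ) hm1 l hl
            have hA2 : (0:ℝ) ≤ A / 2 := by positivity
            exact mul_le_mul_of_nonneg_left this hA2
        _ = A * ((m:ℝ) + 1) ^ l := by ring
        _ = A * ((m + 1 : ℕ):ℝ) ^ l := by push_cast; ring
end

section
/- Let {X(n)}_{n≥1} be i.i.d. ℝ^℘-valued random variables, let ℓ ≥ 1, and let F : (ℝ^℘)^ℓ → ℝ be Borel measurable with E F(X(1),…,X(ℓ)) = 0 and d² = E F²(X(1),…,X(ℓ)) < ∞. Then for every N ≥ 1, Var(Σ_{n=1}^N F(X(n), X(2n), …, X(ℓn))) ≤ ℓ² d² N. -/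
open MeasureTheory ProbabilityTheory
open scoped BigOperators

lemma map_vec_eq_pi {Ω E : Type*} [MeasurableSpace Ω] [MeasurableSpace E]
    (P : Measure Ω) [IsProbabilityMeasure P]
    (X : ℕ → Ω → E) (hXmeas : ∀ n, Measurable (X n))
    (hindep : iIndepFun X P)
    {ℓ : ℕ} (σ : Fin ℓ → ℕ) (hσ : Function.Injective σ) :
    P.map (fun ω i => X (σ i) ω) = Measure.pi (fun i => P.map (X (σ i))) := by
  have hvec : Measurable (fun ω i => X (σ i) ω) :=
    measurable_pi_lambda _ (fun i => hXmeas (σ i))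
  haveI : ∀ i : Fin ℓ, IsProbabilityMeasure (P.map (X (σ i))) :=
    fun i => Measure.isProbabilityMeasure_map (hXmeas (σ i)).aemeasurable
  refine (Measure.pi_eq fun s hs => ?_).symm
  classical
  set sets : ℕ → Set E := fun k => if h : ∃ i, σ i = k then s h.choose else Set.univ with hsets_def
  have hsets : ∀ i, sets (σ i) = s i := by
    intro i
    have h : ∃ j, σ j = σ i := ⟨i, rfl⟩
    simp only [hsets_def, dif_pos h]
    exact congrArg s (hσ h.choose_spec)
  have hmeas_sets : ∀ k ∈ Finset.image σ Finset.univ, MeasurableSet (sets k) := by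
    intro k hk
    rcases Finset.mem_image.1 hk with ⟨i, _, rfl⟩
    rw [hsets]; exact hs i
  have key := hindep.measure_inter_preimage_eq_mul (Finset.image σ Finset.univ)
    (sets := sets) hmeas_sets
  rw [Measure.map_apply hvec (MeasurableSet.univ_pi hs)]
  have hpre : (fun ω i => X (σ i) ω) ⁻¹' Set.pi Set.univ s
      = ⋂ k ∈ Finset.image σ Finset.univ, X k ⁻¹' sets k := by
    ext ω
    simp only [Set.mem_preimage, Set.mem_univ_pi, Set.mem_iInter, Finset.mem_image,
      Finset.mem_univ, true_and]
    constructor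
    · rintro h k ⟨i, rfl⟩
      rw [hsets]; exact h i
    · intro h i
      have := h (σ i) ⟨i, rfl⟩
      rwa [hsets] at this
  rw [hpre, key, Finset.prod_image (fun i _ j _ h => hσ h)]
  refine Finset.prod_congr rfl fun i _ => ?_
  rw [hsets, Measure.map_apply (hXmeas (σ i)) (hs i)]

lemma card_dep_le {ℓ : ℕ} (hℓ : 1 ≤ ℓ) (N n : ℕ) :
    ((Finset.Icc 1 N).filter
      (fun m => ∃ i j : Fin ℓ, ((i : ℕ) + 1) * n = ((j : ℕ) + 1) * m)).card ≤ ℓ ^ 2 := by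
  classical
  haveI : Nonempty (Fin ℓ) := ⟨⟨0, hℓ⟩⟩
  have h := Finset.card_le_card_of_injOn
    (s := (Finset.Icc 1 N).filter
      (fun m => ∃ i j : Fin ℓ, ((i : ℕ) + 1) * n = ((j : ℕ) + 1) * m))
    (f := fun m : ℕ =>
      if h : ∃ p : Fin ℓ × Fin ℓ, ((p.1 : ℕ) + 1) * n = ((p.2 : ℕ) + 1) * m
      then h.choose else Classical.arbitrary _)
    (t := (Finset.univ : Finset (Fin ℓ × Fin ℓ)))
    (fun m _ => Finset.mem_univ _) ?_
  · simpa [sq] using h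
  · intro m₁ hm₁ m₂ hm₂ heq
    rw [Finset.mem_coe, Finset.mem_filter] at hm₁ hm₂
    obtain ⟨-, i₁, j₁, h₁⟩ := hm₁
    obtain ⟨-, i₂, j₂, h₂⟩ := hm₂
    have e₁ : ∃ p : Fin ℓ × Fin ℓ, ((p.1 : ℕ) + 1) * n = ((p.2 : ℕ) + 1) * m₁ := ⟨(i₁, j₁), h₁⟩
    have e₂ : ∃ p : Fin ℓ × Fin ℓ, ((p.1 : ℕ) + 1) * n = ((p.2 : ℕ) + 1) * m₂ := ⟨(i₂, j₂), h₂⟩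
    simp only [dif_pos e₁, dif_pos e₂] at heq
    have s₁ := e₁.choose_spec
    have s₂ := e₂.choose_spec
    rw [heq] at s₁
    have : ((e₂.choose.2 : ℕ) + 1) * m₁ = ((e₂.choose.2 : ℕ) + 1) * m₂ := by
      rw [← s₁, ← s₂]
    exact Nat.eq_of_mul_eq_mul_left (Nat.succ_pos _) this

/-- **Upper variance bound in the i.i.d. case.** If `{X(n)}` are i.i.d., `E F(X(1),…,X(ℓ)) = 0`
and `d² = E F²(X(1),…,X(ℓ)) < ∞`, then `Var(Σ_{n=1}^N F(X(n),…,X(ℓn))) ≤ ℓ² d² N`. -/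
theorem variance_nonconventional_sum_le
    {Ω : Type*} [MeasurableSpace Ω] (P : Measure Ω) [IsProbabilityMeasure P]
    (wp ℓ : ℕ) (hwp : 0 < wp) (hℓ : 1 ≤ ℓ)
    (X : ℕ → Ω → EuclideanSpace ℝ (Fin wp)) (hXmeas : ∀ n, Measurable (X n))
    (hindep : iIndepFun X P)
    (hident : ∀ n m : ℕ, P.map (X n) = P.map (X m))
    (F : (Fin ℓ → EuclideanSpace ℝ (Fin wp)) → ℝ) (hF : Measurable F)
    (hmean : ∫ ω, F (fun i => X ((i : ℕ) + 1) ω) ∂P = 0)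
    (d2 : ℝ) (hd2 : d2 = ∫ ω, (F (fun i => X ((i : ℕ) + 1) ω)) ^ 2 ∂P)
    (hL2 : MemLp (fun ω => F (fun i => X ((i : ℕ) + 1) ω)) 2 P) :
    ∀ N : ℕ,
      variance (fun ω => ∑ n ∈ Finset.Icc 1 N, F (fun i => X (((i : ℕ) + 1) * n) ω)) P ≤
        (ℓ : ℝ) ^ 2 * d2 * N := by
  classical
  intro N
  -- the index maps
  set σ : ℕ → Fin ℓ → ℕ := fun n i => ((i : ℕ) + 1) * n with hσ_def
  have hbinj : Function.Injective (fun i : Fin ℓ => (i : ℕ) + 1) := by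
    intro i j h
    exact Fin.val_injective (Nat.succ_injective h)
  have hσinj : ∀ n, 1 ≤ n → Function.Injective (σ n) := by
    intro n hn i j h
    have : (i : ℕ) + 1 = (j : ℕ) + 1 := Nat.eq_of_mul_eq_mul_right hn h
    exact Fin.val_injective (Nat.succ_injective this)
  have hvec : ∀ τ : Fin ℓ → ℕ, Measurable (fun ω => (fun i => X (τ i) ω)) :=
    fun τ => measurable_pi_lambda _ (fun i => hXmeas (τ i))
  -- all injective index maps give the same law
  have hlaw : ∀ τ : Fin ℓ → ℕ, Function.Injective τ →
      P.map (fun ω i => X (τ i) ω) = P.map (fun ω (i : Fin ℓ) => X ((i : ℕ) + 1) ω) := by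
    intro τ hτ
    rw [map_vec_eq_pi P X hXmeas hindep τ hτ,
      map_vec_eq_pi P X hXmeas hindep _ hbinj]
    exact congrArg Measure.pi (funext fun i => hident _ _)
  -- transfer of integrals
  have htrans : ∀ (G : (Fin ℓ → EuclideanSpace ℝ (Fin wp)) → ℝ), Measurable G → ∀ τ : Fin ℓ → ℕ,
      Function.Injective τ →
      ∫ ω, G (fun i => X (τ i) ω) ∂P = ∫ ω, G (fun i => X ((i : ℕ) + 1) ω) ∂P := by
    intro G hG τ hτ
    rw [← integral_map (hvec τ).aemeasurable hG.aestronglyMeasurable, hlaw τ hτ,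
      integral_map (hvec _).aemeasurable hG.aestronglyMeasurable]
  -- transfer of Memℒp
  have hYL2 : ∀ τ : Fin ℓ → ℕ, Function.Injective τ →
      MemLp (fun ω => F (fun i => X (τ i) ω)) 2 P := by
    intro τ hτ
    have h1 : MemLp F 2 (P.map (fun ω (i : Fin ℓ) => X ((i : ℕ) + 1) ω)) := by
      rw [memLp_map_measure_iff hF.aestronglyMeasurable (hvec _).aemeasurable]
      exact hL2
    rw [← hlaw τ hτ] at h1
    exact (memLp_map_measure_iff hF.aestronglyMeasurable (hvec τ).aemeasurable).1 h1
  -- the summands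
  set Y : ℕ → Ω → ℝ := fun n ω => F (fun i => X (σ n i) ω) with hY_def
  have hYm : ∀ n, Measurable (Y n) := fun n => hF.comp (hvec (σ n))
  have hmem : ∀ n ∈ Finset.Icc 1 N, MemLp (Y n) 2 P :=
    fun n hn => hYL2 (σ n) (hσinj n (Finset.mem_Icc.1 hn).1)
  have hint1 : ∀ n ∈ Finset.Icc 1 N, Integrable (Y n) P :=
    fun n hn => (hmem n hn).integrable one_le_two
  have hYmean : ∀ n ∈ Finset.Icc 1 N, ∫ ω, Y n ω ∂P = 0 := by
    intro n hn
    rw [hY_def]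
    rw [htrans F hF (σ n) (hσinj n (Finset.mem_Icc.1 hn).1)]
    exact hmean
  have hYsq : ∀ n ∈ Finset.Icc 1 N, ∫ ω, (Y n ω) ^ 2 ∂P = d2 := by
    intro n hn
    have hG : Measurable (fun x : Fin ℓ → EuclideanSpace ℝ (Fin wp) => (F x) ^ 2) := hF.pow_const 2
    have := htrans _ hG (σ n) (hσinj n (Finset.mem_Icc.1 hn).1)
    rw [hY_def]
    simpa [← hd2] using this
  have hd2nn : 0 ≤ d2 := hd2 ▸ integral_nonneg fun ω => sq_nonneg _
  -- integrability of products
  have habs : ∀ (a b : ℝ), |a * b| ≤ (a ^ 2 + b ^ 2) / 2 := by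
    intro a b
    rw [abs_mul]
    nlinarith [sq_nonneg (|a| - |b|), sq_abs a, sq_abs b]
  have hsumint : ∀ n ∈ Finset.Icc 1 N, ∀ m ∈ Finset.Icc 1 N,
      Integrable (fun ω => (Y n ω ^ 2 + Y m ω ^ 2) / 2) P := by
    intro n hn m hm
    exact ((hmem n hn).integrable_sq.add (hmem m hm).integrable_sq).div_const 2
  have hprodint : ∀ n ∈ Finset.Icc 1 N, ∀ m ∈ Finset.Icc 1 N,
      Integrable (fun ω => Y n ω * Y m ω) P := by
    intro n hn m hm
    refine Integrable.mono' (hsumint n hn m hm)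
      ((hYm n).mul (hYm m)).aestronglyMeasurable (Filter.Eventually.of_forall fun ω => ?_)
    rw [Real.norm_eq_abs]
    exact habs _ _
  -- each product term is at most d2
  have hterm_le : ∀ n ∈ Finset.Icc 1 N, ∀ m ∈ Finset.Icc 1 N,
      ∫ ω, Y n ω * Y m ω ∂P ≤ d2 := by
    intro n hn m hm
    have h1 : ∫ ω, Y n ω * Y m ω ∂P ≤ ∫ ω, (Y n ω ^ 2 + Y m ω ^ 2) / 2 ∂P := by
      refine integral_mono (hprodint n hn m hm) (hsumint n hn m hm) fun ω => ?_
      exact (le_abs_self _).trans (habs _ _)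
    have h2 : ∫ ω, (Y n ω ^ 2 + Y m ω ^ 2) / 2 ∂P = d2 := by
      rw [integral_div, integral_add (hmem n hn).integrable_sq (hmem m hm).integrable_sq,
        hYsq n hn, hYsq m hm]
      ring
    linarith
  -- independence gives vanishing of products for "disjoint" pairs
  have hzero : ∀ n ∈ Finset.Icc 1 N, ∀ m ∈ Finset.Icc 1 N,
      (¬ ∃ i j : Fin ℓ, ((i : ℕ) + 1) * n = ((j : ℕ) + 1) * m) →
      ∫ ω, Y n ω * Y m ω ∂P = 0 := by
    intro n hn m hm hdisj
    set S : Finset ℕ := Finset.image (σ n) Finset.univ with hS_def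
    set T : Finset ℕ := Finset.image (σ m) Finset.univ with hT_def
    have hST : Disjoint S T := by
      rw [Finset.disjoint_left]
      rintro k hk hk'
      rcases Finset.mem_image.1 hk with ⟨i, _, rfl⟩
      rcases Finset.mem_image.1 hk' with ⟨j, _, hj⟩
      exact hdisj ⟨i, j, hj.symm⟩
    have hfin := hindep.indepFun_finset S T hST hXmeas
    set φ : (∀ _ : S, EuclideanSpace ℝ (Fin wp)) → ℝ := fun x =>
      F (fun i => x ⟨σ n i, Finset.mem_image_of_mem _ (Finset.mem_univ i)⟩) with hφ_def
    set ψ : (∀ _ : T, EuclideanSpace ℝ (Fin wp)) → ℝ := fun x =>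
      F (fun i => x ⟨σ m i, Finset.mem_image_of_mem _ (Finset.mem_univ i)⟩) with hψ_def
    have hφm : Measurable φ :=
      hF.comp (measurable_pi_lambda
        (fun (x : ∀ _ : S, EuclideanSpace ℝ (Fin wp)) (i : Fin ℓ) =>
          x ⟨σ n i, Finset.mem_image_of_mem _ (Finset.mem_univ i)⟩)
        (fun i => measurable_pi_apply _))
    have hψm : Measurable ψ :=
      hF.comp (measurable_pi_lambda
        (fun (x : ∀ _ : T, EuclideanSpace ℝ (Fin wp)) (i : Fin ℓ) =>
          x ⟨σ m i, Finset.mem_image_of_mem _ (Finset.mem_univ i)⟩)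
        (fun i => measurable_pi_apply _))
    have hYind : IndepFun (Y n) (Y m) P := hfin.comp hφm hψm
    have := hYind.integral_fun_mul_eq_mul_integral (hYm n).aestronglyMeasurable (hYm m).aestronglyMeasurable
    have heq : ∫ ω, Y n ω * Y m ω ∂P = (∫ ω, Y n ω ∂P) * ∫ ω, Y m ω ∂P := this
    rw [heq, hYmean n hn, hYmean m hm, mul_zero]
  -- expand the variance
  have hSmem : MemLp (fun ω => ∑ n ∈ Finset.Icc 1 N, Y n ω) 2 P :=
    memLp_finset_sum _ hmem
  show variance (fun ω => ∑ n ∈ Finset.Icc 1 N, Y n ω) P ≤ (ℓ : ℝ) ^ 2 * d2 * N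
  rw [variance_eq_sub hSmem]
  have hmeanS : ∫ ω, ∑ n ∈ Finset.Icc 1 N, Y n ω ∂P = 0 := by
    rw [integral_finset_sum _ hint1]
    exact Finset.sum_eq_zero hYmean
  have hexpand : ∫ ω, (∑ n ∈ Finset.Icc 1 N, Y n ω) ^ 2 ∂P
      = ∑ n ∈ Finset.Icc 1 N, ∑ m ∈ Finset.Icc 1 N, ∫ ω, Y n ω * Y m ω ∂P := by
    have h1 : ∀ ω, (∑ n ∈ Finset.Icc 1 N, Y n ω) ^ 2
        = ∑ n ∈ Finset.Icc 1 N, ∑ m ∈ Finset.Icc 1 N, Y n ω * Y m ω := by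
      intro ω; rw [sq, Finset.sum_mul_sum]
    simp_rw [h1]
    rw [integral_finset_sum _ fun n hn => integrable_finset_sum _ fun m hm => hprodint n hn m hm]
    exact Finset.sum_congr rfl fun n hn => integral_finset_sum _ fun m hm => hprodint n hn m hm
  have hrow : ∀ n ∈ Finset.Icc 1 N,
      ∑ m ∈ Finset.Icc 1 N, ∫ ω, Y n ω * Y m ω ∂P ≤ (ℓ : ℝ) ^ 2 * d2 := by
    intro n hn
    rw [← Finset.sum_filter_add_sum_filter_not (Finset.Icc 1 N)
      (fun m => ∃ i j : Fin ℓ, ((i : ℕ) + 1) * n = ((j : ℕ) + 1) * m)]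
    have hz : ∑ m ∈ (Finset.Icc 1 N).filter
        (fun m => ¬ ∃ i j : Fin ℓ, ((i : ℕ) + 1) * n = ((j : ℕ) + 1) * m),
        ∫ ω, Y n ω * Y m ω ∂P = 0 := by
      refine Finset.sum_eq_zero fun m hm => ?_
      rw [Finset.mem_filter] at hm
      exact hzero n hn m hm.1 hm.2
    rw [hz, add_zero]
    have hb : ∑ m ∈ (Finset.Icc 1 N).filter
        (fun m => ∃ i j : Fin ℓ, ((i : ℕ) + 1) * n = ((j : ℕ) + 1) * m),
        ∫ ω, Y n ω * Y m ω ∂P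
        ≤ ((Finset.Icc 1 N).filter
          (fun m => ∃ i j : Fin ℓ, ((i : ℕ) + 1) * n = ((j : ℕ) + 1) * m)).card • d2 := by
      refine Finset.sum_le_card_nsmul _ _ _ fun m hm => ?_
      rw [Finset.mem_filter] at hm
      exact hterm_le n hn m hm.1
    refine hb.trans ?_
    rw [nsmul_eq_mul]
    have hcard := card_dep_le hℓ N n
    calc (((Finset.Icc 1 N).filter
          (fun m => ∃ i j : Fin ℓ, ((i : ℕ) + 1) * n = ((j : ℕ) + 1) * m)).card : ℝ) * d2
        ≤ ((ℓ : ℝ) ^ 2) * d2 := by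
          apply mul_le_mul_of_nonneg_right _ hd2nn
          exact_mod_cast hcard
      _ = (ℓ : ℝ) ^ 2 * d2 := rfl
  have hfinal : ∑ n ∈ Finset.Icc 1 N, ∑ m ∈ Finset.Icc 1 N, ∫ ω, Y n ω * Y m ω ∂P
      ≤ (ℓ : ℝ) ^ 2 * d2 * N := by
    calc ∑ n ∈ Finset.Icc 1 N, ∑ m ∈ Finset.Icc 1 N, ∫ ω, Y n ω * Y m ω ∂P
        ≤ ∑ _n ∈ Finset.Icc 1 N, (ℓ : ℝ) ^ 2 * d2 := Finset.sum_le_sum hrow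
      _ = (Finset.Icc 1 N).card • ((ℓ : ℝ) ^ 2 * d2) := Finset.sum_const _
      _ = (ℓ : ℝ) ^ 2 * d2 * N := by
          rw [Nat.card_Icc, nsmul_eq_mul]
          push_cast
          ring
  have hP2 : (P[(fun ω => ∑ n ∈ Finset.Icc 1 N, Y n ω) ^ 2] : ℝ)
      = ∫ ω, (∑ n ∈ Finset.Icc 1 N, Y n ω) ^ 2 ∂P := by
    congr 1
  have hP1 : (P[fun ω => ∑ n ∈ Finset.Icc 1 N, Y n ω] : ℝ) = 0 := hmeanS
  rw [hP1]
  calc P[(fun ω => ∑ n ∈ Finset.Icc 1 N, Y n ω) ^ 2] - 0 ^ 2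
      = ∫ ω, (∑ n ∈ Finset.Icc 1 N, Y n ω) ^ 2 ∂P := by rw [hP2]; ring
    _ = ∑ n ∈ Finset.Icc 1 N, ∑ m ∈ Finset.Icc 1 N, ∫ ω, Y n ω * Y m ω ∂P := hexpand
    _ ≤ (ℓ : ℝ) ^ 2 * d2 * N := hfinal
end

section
/- Let Z₁, Z₂, Z₃, Z₄ be real random variables such that Z₁ and Z₂ are independent and Z₃ and Z₄ are independent (the two pairs need not be defined on the same probability space). Then d_K(Z₁+Z₂, Z₃+Z₄) ≤ d_K(Z₁,Z₃) + d_K(Z₂,Z₄). -/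
open MeasureTheory
open scoped ENNReal

/-- Kolmogorov (uniform) distance between a real random variable `f` on `(Ω₁,P₁)` and a real
random variable `g` on `(Ω₂,P₂)`; it depends only on the two laws. -/
noncomputable def kolDist₂ {Ω₁ Ω₂ : Type*} [MeasurableSpace Ω₁] [MeasurableSpace Ω₂]
    (P₁ : Measure Ω₁) (f : Ω₁ → ℝ) (P₂ : Measure Ω₂) (g : Ω₂ → ℝ) : ℝ :=
  ⨆ x : ℝ, |(P₁ {ω | f ω ≤ x}).toReal - (P₂ {ω | g ω ≤ x}).toReal|

namespace KolAux

open ProbabilityTheory Set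

noncomputable def d (μ ν : Measure ℝ) : ℝ := ⨆ x : ℝ, |cdf μ x - cdf ν x|

lemma abs_cdf_sub_le_one (μ ν : Measure ℝ) (x : ℝ) : |cdf μ x - cdf ν x| ≤ 1 := by
  have h1 := cdf_nonneg μ x
  have h2 := cdf_le_one μ x
  have h3 := cdf_nonneg ν x
  have h4 := cdf_le_one ν x
  rw [abs_sub_le_iff]
  constructor <;> linarith

lemma bdd (μ ν : Measure ℝ) : BddAbove (Set.range fun x => |cdf μ x - cdf ν x|) := by
  refine ⟨1, ?_⟩
  rintro y ⟨x, rfl⟩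
  exact abs_cdf_sub_le_one μ ν x

lemma abs_cdf_sub_le_d (μ ν : Measure ℝ) (x : ℝ) : |cdf μ x - cdf ν x| ≤ d μ ν :=
  le_ciSup (bdd μ ν) x

lemma d_nonneg (μ ν : Measure ℝ) : 0 ≤ d μ ν :=
  le_trans (abs_nonneg _) (abs_cdf_sub_le_d μ ν 0)

lemma meas_sum_set (x : ℝ) : MeasurableSet {p : ℝ × ℝ | p.1 + p.2 ≤ x} :=
  measurableSet_le (measurable_fst.add measurable_snd) measurable_const

lemma integrable_cdf (μ ν : Measure ℝ) [IsProbabilityMeasure ν] (x : ℝ) :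
    Integrable (fun a => cdf μ (x - a)) ν := by
  have hm : Measurable fun a : ℝ => cdf μ (x - a) :=
    ((cdf μ).mono.measurable).comp (measurable_const.sub measurable_id)
  refine ⟨hm.aestronglyMeasurable, ?_⟩
  refine (hasFiniteIntegral_const (1 : ℝ)).mono' ?_
  filter_upwards with a
  rw [Real.norm_eq_abs, abs_of_nonneg (cdf_nonneg _ _)]
  exact cdf_le_one _ _

/-- Law of the sum sliced in the first coordinate. -/
lemma G_fst (μ ν : Measure ℝ) [IsProbabilityMeasure μ] [IsProbabilityMeasure ν] (x : ℝ) :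
    ((μ.prod ν) {p : ℝ × ℝ | p.1 + p.2 ≤ x}).toReal = ∫ a, cdf ν (x - a) ∂μ := by
  rw [Measure.prod_apply (meas_sum_set x)]
  have h1 : ∀ a : ℝ, (Prod.mk a ⁻¹' {p : ℝ × ℝ | p.1 + p.2 ≤ x}) = Iic (x - a) := by
    intro a; ext b; simp [le_sub_iff_add_le']
  simp_rw [h1]
  rw [← integral_toReal]
  · exact integral_congr_ae (Filter.Eventually.of_forall fun a => (cdf_eq_real ν (x - a)).symm)
  · exact (Antitone.measurable (fun a b hab => measure_mono (Iic_subset_Iic.2 (by linarith)))).aemeasurable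
  · filter_upwards with a
    exact lt_of_le_of_lt prob_le_one ENNReal.one_lt_top

/-- Law of the sum sliced in the second coordinate. -/
lemma G_snd (μ ν : Measure ℝ) [IsProbabilityMeasure μ] [IsProbabilityMeasure ν] (x : ℝ) :
    ((μ.prod ν) {p : ℝ × ℝ | p.1 + p.2 ≤ x}).toReal = ∫ b, cdf μ (x - b) ∂ν := by
  rw [Measure.prod_apply_symm (meas_sum_set x)]
  have h1 : ∀ b : ℝ, ((fun a => (a, b)) ⁻¹' {p : ℝ × ℝ | p.1 + p.2 ≤ x}) = Iic (x - b) := by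
    intro b; ext a; simp [← le_sub_iff_add_le]
  simp_rw [h1]
  rw [← integral_toReal]
  · exact integral_congr_ae (Filter.Eventually.of_forall fun b => (cdf_eq_real μ (x - b)).symm)
  · exact (Antitone.measurable (fun a b hab => measure_mono (Iic_subset_Iic.2 (by linarith)))).aemeasurable
  · filter_upwards with b
    exact lt_of_le_of_lt prob_le_one ENNReal.one_lt_top

lemma integral_diff_le (μ₁ μ₃ ν : Measure ℝ) [IsProbabilityMeasure μ₁] [IsProbabilityMeasure μ₃]
    [IsProbabilityMeasure ν] (x : ℝ) :
    |∫ b, cdf μ₁ (x - b) ∂ν - ∫ b, cdf μ₃ (x - b) ∂ν| ≤ d μ₁ μ₃ := by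
  rw [← integral_sub (integrable_cdf μ₁ ν x) (integrable_cdf μ₃ ν x)]
  calc |∫ b, (cdf μ₁ (x - b) - cdf μ₃ (x - b)) ∂ν|
      ≤ ∫ b, |cdf μ₁ (x - b) - cdf μ₃ (x - b)| ∂ν := by
        simpa [Real.norm_eq_abs] using
          norm_integral_le_integral_norm (fun b => cdf μ₁ (x - b) - cdf μ₃ (x - b))
    _ ≤ ∫ _b, d μ₁ μ₃ ∂ν := by
        refine integral_mono ((integrable_cdf μ₁ ν x).sub (integrable_cdf μ₃ ν x)).abs
          (integrable_const _) fun b => ?_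
        exact abs_cdf_sub_le_d μ₁ μ₃ (x - b)
    _ = d μ₁ μ₃ := by simp

lemma main_bound (μ₁ μ₂ μ₃ μ₄ : Measure ℝ) [IsProbabilityMeasure μ₁] [IsProbabilityMeasure μ₂]
    [IsProbabilityMeasure μ₃] [IsProbabilityMeasure μ₄] (x : ℝ) :
    |((μ₁.prod μ₂) {p : ℝ × ℝ | p.1 + p.2 ≤ x}).toReal -
      ((μ₃.prod μ₄) {p : ℝ × ℝ | p.1 + p.2 ≤ x}).toReal| ≤ d μ₁ μ₃ + d μ₂ μ₄ := by
  have e1 := G_snd μ₁ μ₂ x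
  have e2 := G_snd μ₃ μ₂ x
  have e3 := G_fst μ₃ μ₂ x
  have e4 := G_fst μ₃ μ₄ x
  have h1 : |((μ₁.prod μ₂) {p : ℝ × ℝ | p.1 + p.2 ≤ x}).toReal -
      ((μ₃.prod μ₂) {p : ℝ × ℝ | p.1 + p.2 ≤ x}).toReal| ≤ d μ₁ μ₃ := by
    rw [e1, e2]; exact integral_diff_le μ₁ μ₃ μ₂ x
  have h2 : |((μ₃.prod μ₂) {p : ℝ × ℝ | p.1 + p.2 ≤ x}).toReal -
      ((μ₃.prod μ₄) {p : ℝ × ℝ | p.1 + p.2 ≤ x}).toReal| ≤ d μ₂ μ₄ := by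
    rw [e3, e4]; exact integral_diff_le μ₂ μ₄ μ₃ x
  calc |((μ₁.prod μ₂) {p : ℝ × ℝ | p.1 + p.2 ≤ x}).toReal -
      ((μ₃.prod μ₄) {p : ℝ × ℝ | p.1 + p.2 ≤ x}).toReal|
      ≤ |((μ₁.prod μ₂) {p : ℝ × ℝ | p.1 + p.2 ≤ x}).toReal -
          ((μ₃.prod μ₂) {p : ℝ × ℝ | p.1 + p.2 ≤ x}).toReal| +
        |((μ₃.prod μ₂) {p : ℝ × ℝ | p.1 + p.2 ≤ x}).toReal -
          ((μ₃.prod μ₄) {p : ℝ × ℝ | p.1 + p.2 ≤ x}).toReal| := abs_sub_le _ _ _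
    _ ≤ d μ₁ μ₃ + d μ₂ μ₄ := add_le_add h1 h2

end KolAux

/-- If `Z₁, Z₂` are independent and `Z₃, Z₄` are independent (the two pairs possibly living on
different probability spaces), then `d_K(Z₁+Z₂, Z₃+Z₄) ≤ d_K(Z₁,Z₃) + d_K(Z₂,Z₄)`. -/
theorem kolDist_add_le_of_indep
    {Ω₁ Ω₂ : Type*} [MeasurableSpace Ω₁] [MeasurableSpace Ω₂]
    (P₁ : Measure Ω₁) [IsProbabilityMeasure P₁]
    (P₂ : Measure Ω₂) [IsProbabilityMeasure P₂]
    (Z₁ Z₂ : Ω₁ → ℝ) (Z₃ Z₄ : Ω₂ → ℝ)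
    (h₁ : Measurable Z₁) (h₂ : Measurable Z₂) (h₃ : Measurable Z₃) (h₄ : Measurable Z₄)
    (hindep₁ : ProbabilityTheory.IndepFun Z₁ Z₂ P₁)
    (hindep₂ : ProbabilityTheory.IndepFun Z₃ Z₄ P₂) :
    kolDist₂ P₁ (fun ω => Z₁ ω + Z₂ ω) P₂ (fun ω => Z₃ ω + Z₄ ω) ≤
      kolDist₂ P₁ Z₁ P₂ Z₃ + kolDist₂ P₁ Z₂ P₂ Z₄ := by
  classical
  open ProbabilityTheory KolAux in
  set μ₁ := P₁.map Z₁ with hμ₁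
  set μ₂ := P₁.map Z₂ with hμ₂
  set μ₃ := P₂.map Z₃ with hμ₃
  set μ₄ := P₂.map Z₄ with hμ₄
  haveI : IsProbabilityMeasure μ₁ := Measure.isProbabilityMeasure_map h₁.aemeasurable
  haveI : IsProbabilityMeasure μ₂ := Measure.isProbabilityMeasure_map h₂.aemeasurable
  haveI : IsProbabilityMeasure μ₃ := Measure.isProbabilityMeasure_map h₃.aemeasurable
  haveI : IsProbabilityMeasure μ₄ := Measure.isProbabilityMeasure_map h₄.aemeasurable
  have law₁ : ∀ x : ℝ, P₁ {ω | Z₁ ω + Z₂ ω ≤ x} = (μ₁.prod μ₂) {p : ℝ × ℝ | p.1 + p.2 ≤ x} := by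
    intro x
    have hmap : P₁.map (fun ω => (Z₁ ω, Z₂ ω)) = μ₁.prod μ₂ :=
      (indepFun_iff_map_prod_eq_prod_map_map h₁.aemeasurable h₂.aemeasurable).mp hindep₁
    rw [← hmap, Measure.map_apply (h₁.prodMk h₂) (KolAux.meas_sum_set x)]
    rfl
  have law₂ : ∀ x : ℝ, P₂ {ω | Z₃ ω + Z₄ ω ≤ x} = (μ₃.prod μ₄) {p : ℝ × ℝ | p.1 + p.2 ≤ x} := by
    intro x
    have hmap : P₂.map (fun ω => (Z₃ ω, Z₄ ω)) = μ₃.prod μ₄ :=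
      (indepFun_iff_map_prod_eq_prod_map_map h₃.aemeasurable h₄.aemeasurable).mp hindep₂
    rw [← hmap, Measure.map_apply (h₃.prodMk h₄) (KolAux.meas_sum_set x)]
    rfl
  have cdf_eq₁ : ∀ (Z : Ω₁ → ℝ), Measurable Z → ∀ x : ℝ,
      (P₁ {ω | Z ω ≤ x}).toReal = cdf (P₁.map Z) x := by
    intro Z hZ x
    haveI : IsProbabilityMeasure (P₁.map Z) := Measure.isProbabilityMeasure_map hZ.aemeasurable
    rw [cdf_eq_real, measureReal_def]
    congr 1
    rw [Measure.map_apply hZ measurableSet_Iic]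
    rfl
  have cdf_eq₂ : ∀ (Z : Ω₂ → ℝ), Measurable Z → ∀ x : ℝ,
      (P₂ {ω | Z ω ≤ x}).toReal = cdf (P₂.map Z) x := by
    intro Z hZ x
    haveI : IsProbabilityMeasure (P₂.map Z) := Measure.isProbabilityMeasure_map hZ.aemeasurable
    rw [cdf_eq_real, measureReal_def]
    congr 1
    rw [Measure.map_apply hZ measurableSet_Iic]
    rfl
  have hd₁ : kolDist₂ P₁ Z₁ P₂ Z₃ = KolAux.d μ₁ μ₃ := by
    unfold kolDist₂ KolAux.d
    congr 1
    funext x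
    rw [cdf_eq₁ Z₁ h₁ x, cdf_eq₂ Z₃ h₃ x]
  have hd₂ : kolDist₂ P₁ Z₂ P₂ Z₄ = KolAux.d μ₂ μ₄ := by
    unfold kolDist₂ KolAux.d
    congr 1
    funext x
    rw [cdf_eq₁ Z₂ h₂ x, cdf_eq₂ Z₄ h₄ x]
  rw [hd₁, hd₂]
  refine Real.iSup_le (fun x => ?_) (add_nonneg (KolAux.d_nonneg _ _) (KolAux.d_nonneg _ _))
  · rw [law₁ x, law₂ x]
    exact KolAux.main_bound μ₁ μ₂ μ₃ μ₄ x
end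

section
/- Let ℓ, l, N_l be positive integers. For each integer r ≥ 1 let B_r = ℕ ∩ (l(r−1), lr], and for 1 ≤ r ≤ N_l set A_r = {1 ≤ r' ≤ N_l : there exist 1 ≤ s,t ≤ ℓ², n ∈ B_r and n' ∈ B_{r'} with |sn − tn'| < l}. Then for every 1 ≤ r ≤ N_l the cardinality of A_r is at most 4ℓ⁵. -/
private lemma aux_add_div (a b c : ℕ) (hc : 0 < c) : (a + b) / c ≤ a / c + b / c + 1 := by
  rw [Nat.add_div hc]
  split_ifs <;> omega


private lemma aux_tail (ℓ : ℕ) (hℓ : 0 < ℓ) :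
    ∑ t ∈ Finset.Icc 1 (ℓ^2), (ℓ^2 / t + 3) ≤ ℓ * ℓ^2 + ℓ^2 * (ℓ - 1) + 3 * ℓ^2 := by
  set m := ℓ^2 with hm
  have hlm : ℓ ≤ m := by rw [hm]; nlinarith [hℓ]
  have hIcc : Finset.Icc 1 m = Finset.Ioc 0 m := by
    ext x; simp only [Finset.mem_Icc, Finset.mem_Ioc]; omega
  rw [hIcc]
  have hsplit : ∑ t ∈ Finset.Ioc 0 ℓ, (m / t + 3) + ∑ t ∈ Finset.Ioc ℓ m, (m / t + 3)
      = ∑ t ∈ Finset.Ioc 0 m, (m / t + 3) :=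
    Finset.sum_Ioc_consecutive _ (Nat.zero_le ℓ) hlm
  rw [← hsplit]
  have hb1 : ∑ t ∈ Finset.Ioc 0 ℓ, (m / t + 3) ≤ ℓ * (m + 3) := by
    calc ∑ t ∈ Finset.Ioc 0 ℓ, (m / t + 3) ≤ ∑ _t ∈ Finset.Ioc 0 ℓ, (m + 3) :=
          Finset.sum_le_sum (fun t _ => by
            have := Nat.div_le_self m t; omega)
      _ = ℓ * (m + 3) := by rw [Finset.sum_const, Nat.card_Ioc]; simp [Nat.mul_comm]
  have hb2 : ∑ t ∈ Finset.Ioc ℓ m, (m / t + 3) ≤ (m - ℓ) * ((ℓ - 1) + 3) := by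
    calc ∑ t ∈ Finset.Ioc ℓ m, (m / t + 3) ≤ ∑ _t ∈ Finset.Ioc ℓ m, ((ℓ - 1) + 3) := by
          refine Finset.sum_le_sum (fun t ht => ?_)
          simp only [Finset.mem_Ioc] at ht
          have h1 : m / t ≤ m / (ℓ + 1) := Nat.div_le_div_left (by omega) (by omega)
          have h2 : m / (ℓ + 1) < ℓ := by
            rw [Nat.div_lt_iff_lt_mul (by omega)]
            rw [hm]; nlinarith [hℓ]
          omega
      _ = (m - ℓ) * ((ℓ - 1) + 3) := by rw [Finset.sum_const, Nat.card_Ioc]; simp [Nat.mul_comm]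
  have : ℓ * (m + 3) + (m - ℓ) * ((ℓ - 1) + 3) ≤ ℓ * m + m * (ℓ - 1) + 3 * m := by
    obtain ⟨k, rfl⟩ : ∃ k, ℓ = k + 1 := ⟨ℓ - 1, by omega⟩
    simp only [Nat.add_sub_cancel]
    have hklm : k + 1 ≤ m := hlm
    nlinarith [Nat.sub_le m (k+1), Nat.sub_add_cancel hklm]
  omega

private lemma aux_final (ℓ : ℕ) (hℓ : 0 < ℓ) :
    ℓ^2 * (ℓ * ℓ^2 + ℓ^2 * (ℓ - 1) + 3 * ℓ^2) ≤ 4 * ℓ^5 := by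
  obtain ⟨k, rfl⟩ : ∃ k, ℓ = k + 1 := ⟨ℓ - 1, by omega⟩
  simp only [Nat.add_sub_cancel]
  have e1 : (k+1)^2 * ((k+1) * (k+1)^2 + (k+1)^2 * k + 3 * (k+1)^2) = (k+1)^4 * (2*k+4) := by ring
  have e2 : 4 * (k+1)^5 = (k+1)^4 * (4*k+4) := by ring
  rw [e1, e2]
  exact Nat.mul_le_mul_left _ (by omega)

/-- **Counting lemma from Lemma 5.3.** With `B_r = ℕ ∩ (l(r−1), lr]` and
`A_r = {1 ≤ r' ≤ N_l : min{|sn − tn'| : 1 ≤ s,t ≤ ℓ², n ∈ B_r, n' ∈ B_{r'}} < l}`,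
one has `|A_r| ≤ 4ℓ⁵` for every `1 ≤ r ≤ N_l`. -/
theorem card_Ar_le (ℓ l Nl : ℕ) (hℓ : 0 < ℓ) (hl : 0 < l) :
    ∀ r : ℕ, 1 ≤ r → r ≤ Nl →
      Set.ncard {r' : ℕ | 1 ≤ r' ∧ r' ≤ Nl ∧
          ∃ s t n n' : ℕ, 1 ≤ s ∧ s ≤ ℓ ^ 2 ∧ 1 ≤ t ∧ t ≤ ℓ ^ 2 ∧
            l * (r - 1) < n ∧ n ≤ l * r ∧ l * (r' - 1) < n' ∧ n' ≤ l * r' ∧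
            |(s * n : ℤ) - (t * n' : ℤ)| < (l : ℤ)} ≤ 4 * ℓ ^ 5 := by
  intro r hr hrN
  set m := ℓ ^ 2 with hm
  set P : Finset (ℕ × ℕ) := (Finset.Icc 1 m) ×ˢ (Finset.Icc 1 m) with hP
  set F : Finset ℕ :=
    P.biUnion (fun p => Finset.Icc (p.1 * (r - 1) / p.2) (p.1 * r / p.2 + 1)) with hF
  have hsub : {r' : ℕ | 1 ≤ r' ∧ r' ≤ Nl ∧
      ∃ s t n n' : ℕ, 1 ≤ s ∧ s ≤ ℓ ^ 2 ∧ 1 ≤ t ∧ t ≤ ℓ ^ 2 ∧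
        l * (r - 1) < n ∧ n ≤ l * r ∧ l * (r' - 1) < n' ∧ n' ≤ l * r' ∧
        |(s * n : ℤ) - (t * n' : ℤ)| < (l : ℤ)} ⊆ ↑F := by
    rintro r' ⟨hr'1, hr'N, s, t, n, n', hs1, hsm, ht1, htm, hn1, hn2, hn'1, hn'2, habs⟩
    have ht0 : 0 < t := ht1
    have habs' := abs_lt.mp habs
    have h1 : s * n < t * n' + l := by
      zify
      push_cast at habs' ⊢
      linarith [habs'.1, habs'.2]
    have h2 : t * n' < s * n + l := by
      zify
      push_cast at habs' ⊢
      linarith [habs'.1, habs'.2]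
    -- lower bound : s*(r-1)/t ≤ r'
    have hnlb : s * (l * (r - 1)) + s ≤ s * n := by
      calc s * (l * (r - 1)) + s = s * (l * (r - 1) + 1) := by ring
        _ ≤ s * n := Nat.mul_le_mul_left s hn1
    have hn'ub : t * n' ≤ t * (l * r') := Nat.mul_le_mul_left t hn'2
    have key1 : l * (s * (r - 1)) < l * (t * r' + 1) := by
      have e1 : l * (s * (r - 1)) = s * (l * (r - 1)) := by ring
      have e2 : l * (t * r' + 1) = t * (l * r') + l := by ring
      have hs1' : (1 : ℕ) ≤ s := hs1
      linarith [hnlb, h1, hn'ub]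
    have key1' : s * (r - 1) ≤ t * r' := by
      have := Nat.lt_of_mul_lt_mul_left key1
      omega
    have hlow : s * (r - 1) / t ≤ r' := by
      calc s * (r - 1) / t ≤ t * r' / t := Nat.div_le_div_right key1'
        _ = r' := Nat.mul_div_cancel_left _ ht0
    -- upper bound : r' ≤ s*r/t + 1
    have hn'lb : t * (l * (r' - 1)) + t ≤ t * n' := by
      calc t * (l * (r' - 1)) + t = t * (l * (r' - 1) + 1) := by ring
        _ ≤ t * n' := Nat.mul_le_mul_left t hn'1
    have hnub : s * n ≤ s * (l * r) := Nat.mul_le_mul_left s hn2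
    have key2 : l * (t * (r' - 1)) < l * (s * r + 1) := by
      have e1 : l * (t * (r' - 1)) = t * (l * (r' - 1)) := by ring
      have e2 : l * (s * r + 1) = s * (l * r) + l := by ring
      have ht0' : (1 : ℕ) ≤ t := ht1
      linarith [hn'lb, h2, hnub]
    have key2' : t * (r' - 1) ≤ s * r := by
      have := Nat.lt_of_mul_lt_mul_left key2
      omega
    have hup : r' ≤ s * r / t + 1 := by
      have h3 : t * (r' - 1) / t ≤ s * r / t := Nat.div_le_div_right key2'
      rw [Nat.mul_div_cancel_left _ ht0] at h3
      omega
    simp only [hF, Finset.coe_biUnion, Set.mem_iUnion, Finset.mem_coe]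
    refine ⟨(s, t), ?_, ?_⟩
    · simp only [hP, Finset.mem_product, Finset.mem_Icc]
      exact ⟨⟨hs1, hsm⟩, ⟨ht1, htm⟩⟩
    · exact Finset.mem_Icc.mpr ⟨hlow, hup⟩
  have hncard : Set.ncard {r' : ℕ | 1 ≤ r' ∧ r' ≤ Nl ∧
      ∃ s t n n' : ℕ, 1 ≤ s ∧ s ≤ ℓ ^ 2 ∧ 1 ≤ t ∧ t ≤ ℓ ^ 2 ∧
        l * (r - 1) < n ∧ n ≤ l * r ∧ l * (r' - 1) < n' ∧ n' ≤ l * r' ∧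
        |(s * n : ℤ) - (t * n' : ℤ)| < (l : ℤ)} ≤ F.card := by
    have := Set.ncard_le_ncard hsub F.finite_toSet
    rwa [Set.ncard_coe_finset] at this
  refine hncard.trans ?_
  have hcard1 : F.card ≤ ∑ p ∈ P, (Finset.Icc (p.1 * (r - 1) / p.2) (p.1 * r / p.2 + 1)).card :=
    Finset.card_biUnion_le
  have hcard2 : ∀ p ∈ P, (Finset.Icc (p.1 * (r - 1) / p.2) (p.1 * r / p.2 + 1)).card
      ≤ m / p.2 + 3 := by
    rintro ⟨s, t⟩ hp
    simp only [hP, Finset.mem_product, Finset.mem_Icc] at hp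
    obtain ⟨⟨hs1, hsm⟩, ht1, htm⟩ := hp
    rw [Nat.card_Icc]
    have hsr : s * r = s * (r - 1) + s := by
      have : r - 1 + 1 = r := by omega
      calc s * r = s * (r - 1 + 1) := by rw [this]
        _ = s * (r - 1) + s := by ring
    have hA : s * r / t ≤ s * (r - 1) / t + s / t + 1 := by
      rw [hsr]; exact aux_add_div _ _ _ ht1
    have hB : s / t ≤ m / t := Nat.div_le_div_right hsm
    have hmono : s * (r - 1) / t ≤ s * r / t :=
      Nat.div_le_div_right (Nat.mul_le_mul_left s (by omega : r - 1 ≤ r))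
    simp only
    omega
  have hsum : ∑ p ∈ P, (m / p.2 + 3) = m * (∑ t ∈ Finset.Icc 1 m, (m / t + 3)) := by
    rw [hP, Finset.sum_product]
    show ∑ _x ∈ Finset.Icc 1 m, ∑ y ∈ Finset.Icc 1 m, (m / y + 3) = _
    rw [Finset.sum_const, Nat.card_Icc, smul_eq_mul]
    congr 1
  have h4 : ∑ p ∈ P, (Finset.Icc (p.1 * (r - 1) / p.2) (p.1 * r / p.2 + 1)).card
      ≤ ∑ p ∈ P, (m / p.2 + 3) := Finset.sum_le_sum hcard2
  have h5 : ∑ t ∈ Finset.Icc 1 m, (m / t + 3) ≤ ℓ * ℓ^2 + ℓ^2 * (ℓ - 1) + 3 * ℓ^2 :=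
    aux_tail ℓ hℓ
  have h6 : m * (ℓ * ℓ^2 + ℓ^2 * (ℓ - 1) + 3 * ℓ^2) ≤ 4 * ℓ^5 := aux_final ℓ hℓ
  calc F.card ≤ ∑ p ∈ P, (Finset.Icc (p.1 * (r - 1) / p.2) (p.1 * r / p.2 + 1)).card := hcard1
    _ ≤ ∑ p ∈ P, (m / p.2 + 3) := h4
    _ = m * (∑ t ∈ Finset.Icc 1 m, (m / t + 3)) := hsum
    _ ≤ m * (ℓ * ℓ^2 + ℓ^2 * (ℓ - 1) + 3 * ℓ^2) := Nat.mul_le_mul_left m h5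
    _ ≤ 4 * ℓ^5 := h6
end
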